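/- For every chain ω in Π^(k)_m (a face of the order complex Δ(Π^(k)_m)), the set F^k(ω) = ⋃_{x ∈ ω} max G_{≤x} is a face of the complex of k-trees; that is, F^k(ω) ∈ 𝒩. -/
import Mathlib

open Classical Set
noncomputable section

/-- The partition of `Fin m` whose only (possibly) non-singleton block is `B`. -/
def blockSetoid {m : ℕ} (B : Set (Fin m)) : Setoid (Fin m) :=
  ⟨fun x y => x = y ∨ (x ∈ B ∧ y ∈ B), by
    refine ⟨fun x => Or.inl rfl, ?_, ?_⟩
    · rintro x y (h | h)
      · exact Or.inl h.symm
      · exact Or.inr ⟨h.2, h.1⟩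
    · rintro x y z (h1 | h1) (h2 | h2)
      · exact Or.inl (h1.trans h2)
      · subst h1; exact Or.inr h2
      · subst h2; exact Or.inr h1
      · exact Or.inr ⟨h1.1, h2.2⟩⟩

/-- `Π^(k)_m`: partitions of `{1,…,m}` all of whose blocks have size ≡ 1 (mod k). -/
def Pik (k m : ℕ) : Set (Setoid (Fin m)) :=
  {s | ∀ c ∈ s.classes, c.ncard ≡ 1 [MOD k]}

/-- `I`: partitions with exactly one non-singleton block (the minimal building set of `Π_m`). -/
def BSI (m : ℕ) : Set (Setoid (Fin m)) :=
  {s | ∃ B : Set (Fin m), 2 ≤ B.ncard ∧ s = blockSetoid B}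

/-- `G`: partitions with exactly one non-singleton block, of size ≡ 1 (mod k). -/
def BSG (k m : ℕ) : Set (Setoid (Fin m)) :=
  {s | ∃ B : Set (Fin m), 2 ≤ B.ncard ∧ B.ncard ≡ 1 [MOD k] ∧ s = blockSetoid B}

/-- `z` is a minimal upper bound of the set `A` within the subposet `P`. -/
def IsMinUB {L : Type*} [PartialOrder L] (P : Set L) (A : Set L) (z : L) : Prop :=
  z ∈ P ∧ (∀ a ∈ A, a ≤ z) ∧ ∀ w ∈ P, (∀ a ∈ A, a ≤ w) → w ≤ z → w = z

/-- Maximal elements of `S` lying below `x`. -/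
def maxBelow {L : Type*} [PartialOrder L] (S : Set L) (x : L) : Set L :=
  {g ∈ S | g ≤ x ∧ ∀ g' ∈ S, g' ≤ x → g ≤ g' → g = g'}

/-- The support of a partition: union of its non-singleton blocks. -/
def suppPart {m : ℕ} (s : Setoid (Fin m)) : Set (Fin m) :=
  {x | ∃ y, x ≠ y ∧ s x y}

/-- Membership in the family of faces of the complex of k-trees: `N ⊆ G` and every
antichain in `N` of size at least two has a unique minimal upper bound in `Pik k m`,
which moreover does not lie in `G`. -/
def memN (k m : ℕ) (N : Set (Setoid (Fin m))) : Prop :=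
  N ⊆ BSG k m ∧ ∀ S : Finset (Setoid (Fin m)), ↑S ⊆ N → 2 ≤ S.card →
    (∀ a ∈ S, ∀ b ∈ S, a ≠ b → ¬ a ≤ b) →
    (∃! z, IsMinUB (Pik k m) ↑S z) ∧
      ∀ z, IsMinUB (Pik k m) ↑S z → z ∉ BSG k m

/-- `Σ(N)`: the set of all (unique minimal-upper-bound) joins of subsets of `N` inside
`Pik k m`; the empty join yields the minimal element. -/
def SigmaSet (k m : ℕ) (N : Set (Setoid (Fin m))) : Set (Setoid (Fin m)) :=
  {a | ∃ X ⊆ N, IsMinUB (Pik k m) X a}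

/-! ### Auxiliary lemmas -/

lemma blockSetoid_rel {m : ℕ} {B : Set (Fin m)} {a b : Fin m} :
    (blockSetoid B) a b ↔ a = b ∨ (a ∈ B ∧ b ∈ B) := Iff.rfl

lemma suppPart_blockSetoid {m : ℕ} {B : Set (Fin m)} (hB : 2 ≤ B.ncard) :
    suppPart (blockSetoid B) = B := by
  ext x
  constructor
  · rintro ⟨y, hxy, (h | h)⟩
    · exact absurd h hxy
    · exact h.1
  · intro hx
    obtain ⟨y, hy, hyx⟩ := Set.exists_ne_of_one_lt_ncard hB x
    exact ⟨y, fun h => hyx h.symm, Or.inr ⟨hx, hy⟩⟩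

lemma blockSetoid_mono {m : ℕ} {B C : Set (Fin m)} (h : B ⊆ C) :
    blockSetoid B ≤ blockSetoid C := by
  rw [Setoid.le_def]
  rintro x y (rfl | hx)
  · exact Or.inl rfl
  · exact Or.inr ⟨h hx.1, h hx.2⟩

/-- A maximal element of `G` below `x ∈ Pik` is `blockSetoid` of its support,
which is a full equivalence class of `x`. -/
lemma maxBelow_struct {k m : ℕ} {x g : Setoid (Fin m)} (hx : x ∈ Pik k m)
    (hg : g ∈ maxBelow (BSG k m) x) :
    g = blockSetoid (suppPart g) ∧ suppPart g ∈ x.classes ∧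
      2 ≤ (suppPart g).ncard ∧ (suppPart g).ncard ≡ 1 [MOD k] := by
  obtain ⟨⟨B, hB2, hB1, rfl⟩, hle, hmax⟩ := hg
  have hBsupp : suppPart (blockSetoid B) = B := suppPart_blockSetoid hB2
  obtain ⟨a₀, ha₀⟩ : B.Nonempty := by
    rcases Set.eq_empty_or_nonempty B with h | h
    · simp [h] at hB2
    · exact h
  set C : Set (Fin m) := {z | x z a₀} with hCdef
  have hCcl : C ∈ x.classes := Setoid.mem_classes x a₀
  have hBC : B ⊆ C := by
    intro b hb
    exact Setoid.le_def.mp hle (Or.inr ⟨hb, ha₀⟩)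
  have hC2 : 2 ≤ C.ncard := le_trans hB2 (Set.ncard_le_ncard hBC (Set.toFinite C))
  have hC1 : C.ncard ≡ 1 [MOD k] := hx C hCcl
  have hCx : blockSetoid C ≤ x := by
    rw [Setoid.le_def]
    rintro a b (rfl | ⟨ha, hb⟩)
    · exact x.refl a
    · exact x.trans ha (x.symm hb)
  have heq : blockSetoid B = blockSetoid C :=
    hmax (blockSetoid C) ⟨C, hC2, hC1, rfl⟩ hCx (blockSetoid_mono hBC)
  have hBeqC : B = C := by
    rw [← hBsupp, heq, suppPart_blockSetoid hC2]
  refine ⟨?_, ?_, ?_, ?_⟩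
  · rw [hBsupp, heq]
  · rw [hBsupp, hBeqC]; exact hCcl
  · rw [hBsupp]; exact hB2
  · rw [hBsupp]; exact hB1

lemma class_subset_of_le {m : ℕ} {x x' : Setoid (Fin m)} (h : x ≤ x')
    {B B' : Set (Fin m)} (hB : B ∈ x.classes) (hB' : B' ∈ x'.classes)
    (hne : (B ∩ B').Nonempty) : B ⊆ B' := by
  obtain ⟨y, rfl⟩ := hB
  obtain ⟨y', rfl⟩ := hB'
  obtain ⟨c, hc, hc'⟩ := hne
  intro a ha
  have hac : x a c := x.trans ha (x.symm hc)
  exact x'.trans (Setoid.le_def.mp h hac) hc'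

/-- For every chain `ω` in `Pik k m`, the union of the sets of factors
(maximal elements of `G` below the members of the chain) is a face of the complex of
k-trees. -/
theorem stmt15 (k m : ℕ) (hk : 1 ≤ k) (hm : m ≡ 1 [MOD k])
    (ω : Set (Setoid (Fin m))) (hω : ω ⊆ Pik k m) (hchain : IsChain (· ≤ ·) ω) :
    memN k m (⋃ x ∈ ω, maxBelow (BSG k m) x) := by
  constructor
  · intro g hg
    simp only [mem_iUnion] at hg
    obtain ⟨x, _, hgx⟩ := hg
    exact hgx.1
  · intro S hS hcard hanti
    -- each element of S is a full class of some chain member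
    have hmem : ∀ g ∈ S, ∃ x ∈ ω, g ∈ maxBelow (BSG k m) x := by
      intro g hg
      have := hS hg
      simpa only [mem_iUnion, exists_prop] using this
    have key : ∀ g ∈ S, g = blockSetoid (suppPart g) ∧
        (∃ x ∈ ω, suppPart g ∈ x.classes) ∧
        2 ≤ (suppPart g).ncard ∧ (suppPart g).ncard ≡ 1 [MOD k] := by
      intro g hg
      obtain ⟨x, hx, hgx⟩ := hmem g hg
      obtain ⟨h1, h2, h3, h4⟩ := maxBelow_struct (hω hx) hgx
      exact ⟨h1, ⟨x, hx, h2⟩, h3, h4⟩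
    -- distinct elements of S have disjoint supports
    have hdisj : ∀ g ∈ S, ∀ g' ∈ S, (suppPart g ∩ suppPart g').Nonempty → g = g' := by
      intro g hg g' hg' hne
      by_contra hgg'
      obtain ⟨x, hx, hBx⟩ := (key g hg).2.1
      obtain ⟨x', hx', hBx'⟩ := (key g' hg').2.1
      rcases hchain.total hx hx' with h | h
      · have hsub : suppPart g ⊆ suppPart g' := class_subset_of_le h hBx hBx' hne
        have : g ≤ g' := by
          rw [(key g hg).1, (key g' hg').1]
          exact blockSetoid_mono hsub
        exact hanti g hg g' hg' hgg' this
      · have hsub : suppPart g' ⊆ suppPart g :=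
          class_subset_of_le h hBx' hBx ⟨hne.choose, hne.choose_spec.2, hne.choose_spec.1⟩
        have : g' ≤ g := by
          rw [(key g hg).1, (key g' hg').1]
          exact blockSetoid_mono hsub
        exact hanti g' hg' g hg (Ne.symm hgg') this
    -- the join
    set R : Fin m → Fin m → Prop :=
      fun a b => a = b ∨ ∃ g ∈ S, a ∈ suppPart g ∧ b ∈ suppPart g with hR
    have hequiv : Equivalence R := by
      refine ⟨fun a => Or.inl rfl, ?_, ?_⟩
      · rintro a b (rfl | ⟨g, hg, ha, hb⟩)
        · exact Or.inl rfl
        · exact Or.inr ⟨g, hg, hb, ha⟩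
      · rintro a b c (rfl | ⟨g, hg, ha, hb⟩) h2
        · exact h2
        · rcases h2 with rfl | ⟨g', hg', hb', hc⟩
          · exact Or.inr ⟨g, hg, ha, hb⟩
          · have : g = g' := hdisj g hg g' hg' ⟨b, hb, hb'⟩
            subst this
            exact Or.inr ⟨g, hg, ha, hc⟩
    set z : Setoid (Fin m) := ⟨R, hequiv⟩ with hz
    have hub : ∀ g ∈ S, g ≤ z := by
      intro g hg
      rw [(key g hg).1, Setoid.le_def]
      rintro a b (rfl | ⟨ha, hb⟩)
      · exact Or.inl rfl
      · exact Or.inr ⟨g, hg, ha, hb⟩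
    have hleast : ∀ w : Setoid (Fin m), (∀ g ∈ S, g ≤ w) → z ≤ w := by
      intro w hw
      rw [Setoid.le_def]
      rintro a b (rfl | ⟨g, hg, ha, hb⟩)
      · exact w.refl a
      · have hgab : g a b := by
          rw [(key g hg).1]
          exact Or.inr ⟨ha, hb⟩
        exact Setoid.le_def.mp (hw g hg) hgab
    have hzPik : z ∈ Pik k m := by
      intro c hc
      obtain ⟨y, rfl⟩ := hc
      by_cases hy : ∃ g ∈ S, y ∈ suppPart g
      · obtain ⟨g, hg, hyg⟩ := hy
        have : {a | z a y} = suppPart g := by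
          ext a
          constructor
          · rintro (rfl | ⟨g', hg', ha, hy'⟩)
            · exact hyg
            · have : g' = g := hdisj g' hg' g hg ⟨y, hy', hyg⟩
              exact this ▸ ha
          · intro ha
            exact Or.inr ⟨g, hg, ha, hyg⟩
        rw [this]
        exact (key g hg).2.2.2
      · have : {a | z a y} = {y} := by
          ext a
          constructor
          · rintro (rfl | ⟨g, hg, ha, hy'⟩)
            · rfl
            · exact absurd ⟨g, hg, hy'⟩ hy
          · rintro rfl
            exact Or.inl rfl
        rw [this, Set.ncard_singleton]
    have hzub : ∀ a ∈ (↑S : Set (Setoid (Fin m))), a ≤ z := fun a ha => hub a ha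
    have hzmin : IsMinUB (Pik k m) ↑S z :=
      ⟨hzPik, hzub, fun w _ hw hwz =>
        le_antisymm hwz (hleast w fun g hg => hw g hg)⟩
    have huniq : ∀ w, IsMinUB (Pik k m) ↑S w → w = z := by
      intro w hw
      exact (hw.2.2 z hzPik hzub (hleast w fun g hg => hw.2.1 g hg)).symm
    refine ⟨⟨z, hzmin, huniq⟩, ?_⟩
    intro w hw hwBSG
    rw [huniq w hw] at hwBSG
    obtain ⟨C, hC2, _, hzC⟩ := hwBSG
    obtain ⟨g₁, hg₁, g₂, hg₂, hne⟩ := Finset.one_lt_card.mp hcard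
    obtain ⟨a, ha⟩ : (suppPart g₁).Nonempty := by
      rcases Set.eq_empty_or_nonempty (suppPart g₁) with h | h
      · have := (key g₁ hg₁).2.2.1; rw [h] at this; simp at this
      · exact h
    obtain ⟨b, hb⟩ : (suppPart g₂).Nonempty := by
      rcases Set.eq_empty_or_nonempty (suppPart g₂) with h | h
      · have := (key g₂ hg₂).2.2.1; rw [h] at this; simp at this
      · exact h
    -- a and b lie in C
    have hsuppC : ∀ g ∈ S, ∀ c ∈ suppPart g, c ∈ C := by
      intro g hg c hc
      obtain ⟨y, hcy, hgcy⟩ := hc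
      have : z c y := Setoid.le_def.mp (hub g hg) hgcy
      rw [hzC] at this
      rcases this with h | h
      · exact absurd h hcy
      · exact h.1
    have hzab : z a b := by
      rw [hzC]
      exact Or.inr ⟨hsuppC g₁ hg₁ a ha, hsuppC g₂ hg₂ b hb⟩
    rcases hzab with rfl | ⟨g, hg, hag, hbg⟩
    · exact hne (hdisj g₁ hg₁ g₂ hg₂ ⟨a, ha, hb⟩)
    · have h1 : g = g₁ := hdisj g hg g₁ hg₁ ⟨a, hag, ha⟩
      have h2 : g = g₂ := hdisj g hg g₂ hg₂ ⟨b, hbg, hb⟩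
      exact hne (h1 ▸ h2)
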